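/- With b_p' the Drücker-Prager function, for (s_m,s) ∈ K'_stress and (e_m,e) ∈ K'_strain, the equality b_p'((e_m,e),(s_m,s)) = e_m s_m + tr(e s) holds if and only if the flow rule holds: ((e_m + k_d(tan φ − tan θ)‖e‖), e) ∈ ∂Ψ_{K'_stress}(s_m, s), where Ψ_{K'_stress} is the indicator function of K'_stress and ∂ is the subdifferential with respect to the pairing ⟨·,·⟩'. -/

import Mathlib

open Real
noncomputable section

/-- The norm `‖a‖ = √(tr(a²))` on symmetric matrices. -/
def symNorm {n : ℕ} (a : Matrix (Fin n) (Fin n) ℝ) : ℝ :=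
  Real.sqrt ((a * a).trace)

lemma trace_mul_self_eq {n : ℕ} (a : Matrix (Fin n) (Fin n) ℝ) (ha : a.IsSymm) :
    (a * a).trace = ∑ p : Fin n × Fin n, (a p.1 p.2) ^ 2 := by
  simp only [Matrix.trace, Matrix.diag, Matrix.mul_apply]
  rw [← Finset.sum_product']
  refine Finset.sum_congr rfl fun p _ => ?_
  rw [ha.apply p.1 p.2, sq]

lemma symNorm_nonneg {n : ℕ} (a : Matrix (Fin n) (Fin n) ℝ) : 0 ≤ symNorm a :=
  Real.sqrt_nonneg _

lemma symNorm_sq {n : ℕ} (a : Matrix (Fin n) (Fin n) ℝ) (ha : a.IsSymm) :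
    symNorm a ^ 2 = (a * a).trace := by
  rw [symNorm, Real.sq_sqrt]
  rw [trace_mul_self_eq a ha]
  positivity

lemma trace_mul_le_symNorm {n : ℕ} (a b : Matrix (Fin n) (Fin n) ℝ)
    (ha : a.IsSymm) (hb : b.IsSymm) : (a * b).trace ≤ symNorm a * symNorm b := by
  have key : (a * b).trace = ∑ p : Fin n × Fin n, (a p.1 p.2) * (b p.1 p.2) := by
    simp only [Matrix.trace, Matrix.diag, Matrix.mul_apply]
    rw [← Finset.sum_product']
    refine Finset.sum_congr rfl fun p _ => ?_
    rw [hb.apply p.1 p.2]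

  have cs := Finset.sum_mul_sq_le_sq_mul_sq Finset.univ
    (fun p : Fin n × Fin n => a p.1 p.2) (fun p : Fin n × Fin n => b p.1 p.2)
  have h1 : (a * b).trace ≤ |(a * b).trace| := le_abs_self _
  have h2 : |(a * b).trace| = Real.sqrt ((a * b).trace ^ 2) := (Real.sqrt_sq_eq_abs _).symm
  have h3 : Real.sqrt ((a * b).trace ^ 2) ≤ Real.sqrt ((a * a).trace * (b * b).trace) := by
    apply Real.sqrt_le_sqrt
    rw [key, trace_mul_self_eq a ha, trace_mul_self_eq b hb]
    exact cs
  have h4 : Real.sqrt ((a * a).trace * (b * b).trace) = symNorm a * symNorm b := by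
    rw [symNorm, symNorm, Real.sqrt_mul]
    rw [trace_mul_self_eq a ha]; positivity
  linarith

theorem bpDP_eq_pairing_iff_flow_rule (n : ℕ) (c kd φ θ : ℝ) (hc : 0 < c) (hkd : 0 < kd)
    (hφ : φ ∈ Set.Ioo 0 (π / 2)) (hθ : θ ∈ Set.Icc 0 φ)
    (em sm : ℝ) (e s : Matrix (Fin n) (Fin n) ℝ)
    (he : e.IsSymm) (he0 : e.trace = 0) (hs : s.IsSymm) (hs0 : s.trace = 0)
    -- (s_m, s) ∈ K'_stress
    (hsK : (1 / kd) * symNorm s + sm * Real.tan φ ≤ c)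
    -- (e_m, e) ∈ K'_strain
    (heK : kd * Real.tan θ * symNorm e ≤ em) :
    (c / Real.tan φ) * em
        + (kd * (Real.tan θ - Real.tan φ)) * (sm - c / Real.tan φ) * symNorm e
      = em * sm + (e * s).trace ↔
      -- flow rule: ((e_m + k_d(tan φ − tan θ)‖e‖), e) ∈ ∂Ψ_{K'_stress}(s_m, s),
      -- i.e. it lies in the normal cone to K'_stress at (s_m, s)
      ∀ (tm : ℝ) (t : Matrix (Fin n) (Fin n) ℝ), t.IsSymm → t.trace = 0 →
        (1 / kd) * symNorm t + tm * Real.tan φ ≤ c →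
        (em + kd * (Real.tan φ - Real.tan θ) * symNorm e) * (tm - sm)
            + (e * (t - s)).trace ≤ 0 := by
  set T := Real.tan φ with hT
  have hTpos : 0 < T := Real.tan_pos_of_pos_of_lt_pi_div_two hφ.1 hφ.2
  have htθ : 0 ≤ Real.tan θ :=
    Real.tan_nonneg_of_nonneg_of_le_pi_div_two hθ.1 (le_of_lt (lt_of_le_of_lt hθ.2 hφ.2))
  have htθφ : Real.tan θ ≤ T := by
    rcases eq_or_lt_of_le hθ.2 with h | h
    · rw [h]
    · exact le_of_lt (Real.tan_lt_tan_of_nonneg_of_lt_pi_div_two hθ.1 hφ.2 h)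
  set N := symNorm e with hN
  have hNpos : 0 ≤ N := symNorm_nonneg e
  set A := em + kd * (T - Real.tan θ) * N with hA
  clear_value T N A
  -- A ≥ kd * T * N ≥ 0
  have hAge : kd * T * N ≤ A := by
    have : kd * Real.tan θ * N ≤ em := heK
    nlinarith
  have hA0 : 0 ≤ A := le_trans (by positivity) hAge
  -- key sup bound: for any feasible (tm, t), A * tm + tr(e t) ≤ A * c / T
  have key : ∀ (tm : ℝ) (t : Matrix (Fin n) (Fin n) ℝ), t.IsSymm →
      (1 / kd) * symNorm t + tm * T ≤ c →
      A * tm + (e * t).trace ≤ A * (c / T) := by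
    intro tm t ht htK
    have hM : 0 ≤ symNorm t := symNorm_nonneg t
    have h1 : (e * t).trace ≤ N * symNorm t := by
      rw [hN]; exact trace_mul_le_symNorm e t he ht
    have h2 : N * symNorm t ≤ (A / (kd * T)) * symNorm t := by
      apply mul_le_mul_of_nonneg_right _ hM
      rw [le_div_iff₀ (by positivity)]
      nlinarith
    have h3 : tm ≤ (c - (1 / kd) * symNorm t) / T := by
      rw [le_div_iff₀ hTpos]; linarith
    have h4 : A * tm ≤ A * ((c - (1 / kd) * symNorm t) / T) :=
      mul_le_mul_of_nonneg_left h3 hA0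
    have h5 : A * ((c - (1 / kd) * symNorm t) / T) + (A / (kd * T)) * symNorm t
        = A * (c / T) := by
      field_simp
      ring
    linarith
  -- the equality is equivalent to A * sm + tr(e s) = A * (c / T)
  have heq_iff : ((c / T) * em + (kd * (Real.tan θ - T)) * (sm - c / T) * N
      = em * sm + (e * s).trace) ↔ A * sm + (e * s).trace = A * (c / T) := by
    constructor <;> intro h
    · have : A * (c / T) - A * sm - (e * s).trace
        = (c / T) * em + (kd * (Real.tan θ - T)) * (sm - c / T) * N
          - (em * sm + (e * s).trace) := by rw [hA]; ring
      linarith [this, h]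
    · have : (c / T) * em + (kd * (Real.tan θ - T)) * (sm - c / T) * N
          - (em * sm + (e * s).trace) = A * (c / T) - (A * sm + (e * s).trace) := by
        rw [hA]; ring
      linarith [this, h]
  rw [heq_iff]
  constructor
  · intro heq tm t ht ht0 htK
    have h := key tm t ht htK
    have htr : (e * (t - s)).trace = (e * t).trace - (e * s).trace := by
      rw [Matrix.mul_sub, Matrix.trace_sub]
    rw [htr]
    have hexp : A * (tm - sm) = A * tm - A * sm := by ring
    rw [hexp]
    linarith [h, heq]
  · intro hflow
    have hle : A * sm + (e * s).trace ≤ A * (c / T) := key sm s hs hsK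
    -- apply flow rule at (c/T, 0)
    have h0 : symNorm (0 : Matrix (Fin n) (Fin n) ℝ) = 0 := by
      simp [symNorm]
    have hfeas : (1 / kd) * symNorm (0 : Matrix (Fin n) (Fin n) ℝ) + (c / T) * T ≤ c := by
      rw [h0]
      field_simp
      linarith
    have h := hflow (c / T) 0 (by simp [Matrix.IsSymm]) (by simp) hfeas
    have htr : (e * ((0 : Matrix (Fin n) (Fin n) ℝ) - s)).trace = -(e * s).trace := by
      rw [Matrix.mul_sub, Matrix.trace_sub, Matrix.mul_zero, Matrix.trace_zero]
      ring
    rw [htr] at h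
    have hexp : A * (c / T - sm) = A * (c / T) - A * sm := by ring
    have : A * (c / T) ≤ A * sm + (e * s).trace := by linarith
    linarith
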